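/- Let μ be a Borel probability measure on E, let z ∈ E, and let w ∈ L¹(E,μ) be an integration-by-parts weight for (μ,z). Assume: (i) the pushforward measure μ∘g⁻¹ is absolutely continuous with respect to Lebesgue measure on ℝ; (ii) for μ-almost every x ∈ E the minimum of x over [0,1] is attained at a unique point, and τ : E → [0,1] is a measurable map with x(τ(x)) = g(x) for μ-a.e. x; (iii) for every φ ∈ C¹_b(E), every ε > 0 and every r ∈ ℝ with r + ε < 0: (1/(2ε)) ∫_{{x : r−ε ≤ g(x) ≤ r+ε}} z(τ(x)) φ(x) μ(dx) = − ∫_E θ_{r,ε}(g(x)) ( Dφ(x)(z) − w(x) φ(x) ) μ(dx). Then for every φ ∈ C¹_b(E) the function G : (−∞,0) → ℝ defined by G(r) = − ∫_{{x : g(x) ≥ r}} ( Dφ(x)(z) − w(x) φ(x) ) μ(dx) is continuous, and for every Borel set A ⊆ (−∞,0): ∫_E 1_A(g(x)) z(τ(x)) φ(x) μ(dx) = ∫_A G(r) dr. (Equivalently, 𝔼[z(τ)φ | g = r]·ρ(r) = G(r) for every r < 0, where ρ is the density of μ∘g⁻¹.) -/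

import Mathlib

open MeasureTheory Filter Metric Topology

noncomputable section

/-- `E = C([0,1])` with the supremum norm. -/
abbrev E : Type := C(Set.Icc (0:ℝ) 1, ℝ)

/-- `φ ∈ C¹_b(X)`: `φ` is continuously Fréchet differentiable, bounded, with bounded
derivative. -/
def IsC1b {X : Type*} [NormedAddCommGroup X] [NormedSpace ℝ X] (φ : X → ℝ) : Prop :=
  ContDiff ℝ 1 φ ∧ (∃ C, ∀ x, |φ x| ≤ C) ∧ (∃ C, ∀ x, ‖fderiv ℝ φ x‖ ≤ C)

instance : MeasurableSpace E := borel E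
instance : BorelSpace E := ⟨rfl⟩

/-- `g(x) = min_{t ∈ [0,1]} x(t)`. -/
def g : E → ℝ := fun x => ⨅ t : Set.Icc (0:ℝ) 1, x t

/-- The piecewise linear cut-off `θ_{r,ε}`. -/
def theta (r ε ξ : ℝ) : ℝ :=
  if ξ < r - ε then 0 else if ξ ≤ r + ε then (ξ - r + ε) / (2 * ε) else 1

namespace SurfaceAux

lemma g_le (x : E) (t : Set.Icc (0:ℝ) 1) : g x ≤ x t :=
  ciInf_le (isCompact_range x.continuous).bddBelow t

lemma le_g (x : E) (c : ℝ) (h : ∀ t, c ≤ x t) : c ≤ g x := le_ciInf h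

lemma g_lip : LipschitzWith 1 g := by
  apply LipschitzWith.of_dist_le_mul
  intro x y
  rw [Real.dist_eq, NNReal.coe_one, one_mul]
  have key : ∀ u v : E, g u ≤ g v + dist u v := by
    intro u v
    have : g u - dist u v ≤ g v := by
      apply le_g
      intro t
      have h1 : g u ≤ u t := g_le u t
      have h2 : u t - v t ≤ dist u v :=
        (le_abs_self _).trans (by rw [← Real.dist_eq]; exact ContinuousMap.dist_apply_le_dist t)
      linarith
    linarith
  have h1 := key x y
  have h2 := key y x
  rw [dist_comm y x] at h2
  rw [abs_sub_le_iff]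
  constructor <;> linarith

lemma g_cont : Continuous g := g_lip.continuous

lemma cont_of_null_level {α : Type*} [MeasurableSpace α] (μ : Measure α)
    [IsProbabilityMeasure μ] (gg : α → ℝ) (hgm : Measurable gg)
    (F : α → ℝ) (hFm : AEStronglyMeasurable F μ) (hFi : Integrable F μ)
    (hnull : ∀ r : ℝ, μ {x | gg x = r} = 0) :
    Continuous fun r => ∫ x in {x | r ≤ gg x}, F x ∂μ := by
  have hms : ∀ r : ℝ, MeasurableSet {x | r ≤ gg x} := fun r =>
    measurableSet_le measurable_const hgm
  have : ∀ r : ℝ, ∫ x in {x | r ≤ gg x}, F x ∂μ = ∫ x, ({x | r ≤ gg x}).indicator F x ∂μ :=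
    fun r => (integral_indicator (hms r)).symm
  simp_rw [this]
  rw [continuous_iff_continuousAt]
  intro r₀
  apply tendsto_integral_filter_of_dominated_convergence (fun x => ‖F x‖)
  · exact Eventually.of_forall fun r => hFm.indicator (hms r)
  · exact Eventually.of_forall fun r => Eventually.of_forall fun x =>
      norm_indicator_le_norm_self F x
  · exact hFi.norm
  · have : ∀ᵐ x ∂μ, gg x ≠ r₀ := by
      rw [ae_iff]
      simpa using hnull r₀
    filter_upwards [this] with x hx
    rcases hx.lt_or_gt with h | h
    · have hev : ∀ᶠ r in nhds r₀, ({x | r ≤ gg x}).indicator F x = 0 := by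
        filter_upwards [eventually_gt_nhds h] with r hr
        exact Set.indicator_of_notMem (by simpa using hr.not_ge) F
      have h0 : ({x | r₀ ≤ gg x}).indicator F x = 0 :=
        Set.indicator_of_notMem (by simpa using h.not_ge) F
      rw [h0]
      exact Tendsto.congr' (hev.mono fun r hr => hr.symm) tendsto_const_nhds
    · have hev : ∀ᶠ r in nhds r₀, ({x | r ≤ gg x}).indicator F x = F x := by
        filter_upwards [eventually_lt_nhds h] with r hr
        exact Set.indicator_of_mem (show x ∈ {x | r ≤ gg x} from le_of_lt hr) F
      have h0 : ({x | r₀ ≤ gg x}).indicator F x = F x :=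
        Set.indicator_of_mem (show x ∈ {x | r₀ ≤ gg x} from le_of_lt h) F
      rw [h0]
      exact Tendsto.congr' (hev.mono fun r hr => hr.symm) tendsto_const_nhds

lemma interval_swap {α : Type*} [MeasurableSpace α] (μ : Measure α) [IsProbabilityMeasure μ]
    (gg : α → ℝ) (hgm : Measurable gg)
    (F : α → ℝ) (hFm : AEStronglyMeasurable F μ) (hFi : Integrable F μ) (a b : ℝ) :
    ∫ r in Set.Ioc a b, (∫ x in {x | r ≤ gg x}, F x ∂μ)
      = ∫ x, (volume (Set.Ioc a (min b (gg x)))).toReal * F x ∂μ := by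
  set f : ℝ → α → ℝ := fun r x => if r ≤ gg x then F x else 0 with hf
  have hS : MeasurableSet {p : ℝ × α | p.1 ≤ gg p.2} :=
    measurableSet_le measurable_fst (hgm.comp measurable_snd)
  have huncurry : Function.uncurry f =
      Set.indicator {p : ℝ × α | p.1 ≤ gg p.2} (fun p => F p.2) := by
    ext p
    simp only [Function.uncurry, hf, Set.indicator_apply, Set.mem_setOf_eq]
  have hki : Integrable (Function.uncurry f) ((volume.restrict (Set.Ioc a b)).prod μ) := by
    have hbound : Integrable (fun p : ℝ × α => ‖F p.2‖)
        ((volume.restrict (Set.Ioc a b)).prod μ) := by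
      have := (integrable_const (1:ℝ) (μ := volume.restrict (Set.Ioc a b))).mul_prod hFi.norm
      simpa using this
    apply hbound.mono'
    · rw [huncurry]
      exact (hFm.comp_snd).indicator hS
    · apply Eventually.of_forall
      intro p
      rw [huncurry]
      simpa using norm_indicator_le_norm_self (fun p : ℝ × α => F p.2) p
  have swap := integral_integral_swap hki
  have lhs_eq : ∀ r : ℝ, ∫ x, f r x ∂μ = ∫ x in {x | r ≤ gg x}, F x ∂μ := by
    intro r
    rw [← integral_indicator (measurableSet_le measurable_const hgm)]
    apply integral_congr_ae
    apply Eventually.of_forall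
    intro x
    simp [hf, Set.indicator_apply]
  have rhs_eq : ∀ x : α, ∫ r in Set.Ioc a b, f r x
      = (volume (Set.Ioc a (min b (gg x)))).toReal * F x := by
    intro x
    have : (fun r => f r x) = Set.indicator (Set.Iic (gg x)) (fun _ => F x) := by
      ext r
      simp [hf, Set.indicator_apply]
    rw [this, setIntegral_indicator measurableSet_Iic, setIntegral_const,
      Set.Ioc_inter_Iic, smul_eq_mul, measureReal_def]
  calc ∫ r in Set.Ioc a b, (∫ x in {x | r ≤ gg x}, F x ∂μ)
      = ∫ r in Set.Ioc a b, ∫ x, f r x ∂μ := by simp_rw [lhs_eq]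
    _ = ∫ x, (∫ r in Set.Ioc a b, f r x) ∂μ := swap
    _ = ∫ x, (volume (Set.Ioc a (min b (gg x)))).toReal * F x ∂μ := by simp_rw [rhs_eq]

lemma vol_theta (r ε c : ℝ) (hε : 0 < ε) :
    (volume (Set.Ioc (r - ε) (min (r + ε) c))).toReal = 2 * ε * theta r ε c := by
  rw [Real.volume_Ioc, theta]
  rcases lt_or_ge c (r - ε) with h | h
  · rw [if_pos h, min_eq_right (by linarith), ENNReal.toReal_ofReal']
    rw [max_eq_right (by linarith)]
    ring
  · rw [if_neg (not_lt.2 h)]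
    rcases le_or_gt c (r + ε) with h2 | h2
    · rw [if_pos h2, min_eq_right h2, ENNReal.toReal_ofReal (by linarith)]
      field_simp
      ring
    · rw [if_neg (not_le.2 h2), min_eq_left (le_of_lt h2), ENNReal.toReal_ofReal (by linarith)]
      ring

lemma avg_tendsto_of_continuous {G : ℝ → ℝ} (hG : Continuous G) (s : ℝ) :
    Tendsto (fun ε => ⨍ y in closedBall s ε, G y) (𝓝[>] (0:ℝ)) (𝓝 (G s)) := by
  rw [Metric.tendsto_nhds]
  intro δ hδ
  obtain ⟨η, hη, hcont⟩ := Metric.continuousAt_iff.1 hG.continuousAt (δ/2) (by linarith)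
  filter_upwards [Ioo_mem_nhdsGT hη] with ε hε
  obtain ⟨hε0, hεη⟩ := hε
  have hvol : volume (closedBall s ε) = ENNReal.ofReal (2*ε) := by
    rw [Real.volume_closedBall]
  have hvtr : (volume (closedBall s ε)).toReal = 2*ε := by
    rw [hvol, ENNReal.toReal_ofReal (by linarith)]
  have hvolpos : 0 < (volume (closedBall s ε)).toReal := by rw [hvtr]; linarith
  have hInt : IntegrableOn G (closedBall s ε) volume :=
    (hG.locallyIntegrable (μ := volume)).integrableOn_isCompact (isCompact_closedBall s ε)
  have key : (∫ y in closedBall s ε, G y) = (∫ y in closedBall s ε, (G y - G s))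
      + (volume (closedBall s ε)).toReal * G s := by
    rw [integral_sub hInt
      (integrableOn_const (by rw [hvol]; exact ENNReal.ofReal_ne_top)),
      setIntegral_const, smul_eq_mul, measureReal_def]
    ring
  have hbound : ‖∫ y in closedBall s ε, (G y - G s)‖
      ≤ (δ/2) * (volume (closedBall s ε)).toReal := by
    apply norm_setIntegral_le_of_norm_le_const (by rw [hvol]; exact ENNReal.ofReal_lt_top)
    · intro y hy
      have h1 : dist y s < η := lt_of_le_of_lt (mem_closedBall.1 hy) hεη
      have h2 := hcont h1
      rw [Real.norm_eq_abs]
      rw [Real.dist_eq] at h2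
      linarith [le_of_lt h2]
  rw [setAverage_eq, measureReal_def, smul_eq_mul, Real.dist_eq, key]
  have heq : (volume (closedBall s ε)).toReal⁻¹ *
      ((∫ y in closedBall s ε, (G y - G s)) + (volume (closedBall s ε)).toReal * G s) - G s
      = (volume (closedBall s ε)).toReal⁻¹ * ∫ y in closedBall s ε, (G y - G s) := by
    field_simp
    ring
  rw [heq, abs_mul, abs_inv, abs_of_pos hvolpos]
  calc (volume (closedBall s ε)).toReal⁻¹ * |∫ y in closedBall s ε, (G y - G s)|
      ≤ (volume (closedBall s ε)).toReal⁻¹ * ((δ/2) * (volume (closedBall s ε)).toReal) := by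
        apply mul_le_mul_of_nonneg_left _ (inv_nonneg.2 hvolpos.le)
        rw [← Real.norm_eq_abs]; exact hbound
    _ = δ/2 := by
        rw [hvtr]
        field_simp
    _ < δ := by linarith

lemma density_eq (νp νm : Measure ℝ) [IsFiniteMeasure νp] [IsFiniteMeasure νm]
    (hp : νp ≪ (volume : Measure ℝ)) (hm : νm ≪ (volume : Measure ℝ))
    {G : ℝ → ℝ} (hG : Continuous G)
    (hint : ∀ a b : ℝ, a < b → b < 0 →
      (νp (Set.Ioc a b)).toReal - (νm (Set.Ioc a b)).toReal = ∫ r in Set.Ioc a b, G r) :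
    ∀ A : Set ℝ, MeasurableSet A → A ⊆ Set.Iio 0 →
      (νp A).toReal - (νm A).toReal = ∫ r in A, G r := by
  set ρ : ℝ → ℝ := fun s => (νp.rnDeriv volume s).toReal - (νm.rnDeriv volume s).toReal with hρ
  have hρi : Integrable ρ volume :=
    (Measure.integrable_toReal_rnDeriv).sub (Measure.integrable_toReal_rnDeriv)
  have hρset : ∀ A : Set ℝ, MeasurableSet A →
      ∫ r in A, ρ r = (νp A).toReal - (νm A).toReal := by
    intro A hA
    simp only [hρ]
    rw [integral_sub (Measure.integrable_toReal_rnDeriv).integrableOn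
        (Measure.integrable_toReal_rnDeriv).integrableOn,
      Measure.setIntegral_toReal_rnDeriv' hp hA, Measure.setIntegral_toReal_rnDeriv' hm hA,
    measureReal_def, measureReal_def]
  have hdiff : ∀ᵐ s ∂(volume : Measure ℝ),
      Tendsto (fun ε => ⨍ y in closedBall s ε, ρ y) (𝓝[>] (0:ℝ)) (𝓝 (ρ s)) := by
    filter_upwards [(Besicovitch.vitaliFamily (volume : Measure ℝ)).ae_tendsto_average
      hρi.locallyIntegrable] with s hs
    exact hs.comp (Besicovitch.tendsto_filterAt volume s)
  have haeeq : ∀ᵐ s ∂(volume.restrict (Set.Iio (0:ℝ))), ρ s = G s := by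
    rw [ae_restrict_iff' measurableSet_Iio]
    filter_upwards [hdiff] with s hs hsneg
    have T2 := avg_tendsto_of_continuous hG s
    have hcong : ∀ᶠ ε in 𝓝[>] (0:ℝ),
        (⨍ y in closedBall s ε, G y) = ⨍ y in closedBall s ε, ρ y := by
      filter_upwards [Ioo_mem_nhdsGT
        (show (0:ℝ) < -s by simpa using hsneg)] with ε hε
      obtain ⟨hε0, hεs⟩ := hε
      rw [setAverage_eq, setAverage_eq]
      congr 1
      rw [Real.closedBall_eq_Icc, integral_Icc_eq_integral_Ioc, integral_Icc_eq_integral_Ioc,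
        hρset _ measurableSet_Ioc, hint (s - ε) (s + ε) (by linarith) (by linarith)]
    exact tendsto_nhds_unique hs (Filter.Tendsto.congr' hcong T2)
  intro A hA hA0
  rw [← hρset A hA]
  apply setIntegral_congr_ae hA
  have := (ae_restrict_iff' measurableSet_Iio).1 haeeq
  filter_upwards [this] with s hs hsA
  exact hs (hA0 hsA)

end SurfaceAux

open SurfaceAux in
/-- Under an integration-by-parts weight, absolute continuity of the law of
`g`, a.e. uniqueness of the minimizer, and the approximate identity (iii), the function
`G(r) = −∫_{g ≥ r} (Dφ·z − wφ) dμ` is continuous on `(−∞,0)` and is a density (w.r.t.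
Lebesgue measure on `(−∞,0)`) for the pushforward under `g` of the measure `z(τ(·))φ·μ`. -/
theorem surface_density_of_min_functional
    (μ : Measure E) [IsProbabilityMeasure μ] (z : E) (w : E → ℝ)
    (hw : Integrable w μ)
    (hweight : ∀ φ : E → ℝ, IsC1b φ → ∫ x, fderiv ℝ φ x z ∂μ = ∫ x, φ x * w x ∂μ)
    (habs : μ.map g ≪ (volume : Measure ℝ))
    (huniq : ∀ᵐ x ∂μ, ∃! t : Set.Icc (0:ℝ) 1, x t = g x)
    (τ : E → Set.Icc (0:ℝ) 1) (hτmeas : Measurable τ)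
    (hτ : ∀ᵐ x ∂μ, x (τ x) = g x)
    (hkey : ∀ φ : E → ℝ, IsC1b φ → ∀ ε : ℝ, 0 < ε → ∀ r : ℝ, r + ε < 0 →
      (1 / (2 * ε)) * ∫ x in {x | r - ε ≤ g x ∧ g x ≤ r + ε}, z (τ x) * φ x ∂μ
        = - ∫ x, theta r ε (g x) * (fderiv ℝ φ x z - w x * φ x) ∂μ)
    (φ : E → ℝ) (hφ : IsC1b φ) :
    ContinuousOn
      (fun r : ℝ => - ∫ x in {x | r ≤ g x}, (fderiv ℝ φ x z - w x * φ x) ∂μ)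
      (Set.Iio 0) ∧
    ∀ A : Set ℝ, MeasurableSet A → A ⊆ Set.Iio 0 →
      ∫ x, A.indicator (fun _ => (1:ℝ)) (g x) * (z (τ x) * φ x) ∂μ
        = ∫ r in A, - ∫ x in {x | r ≤ g x}, (fderiv ℝ φ x z - w x * φ x) ∂μ := by
  have hgm : Measurable g := g_cont.measurable
  have hφc : Continuous φ := hφ.1.continuous
  obtain ⟨Cφ, hCφ⟩ := hφ.2.1
  obtain ⟨Cd, hCd⟩ := hφ.2.2
  set F : E → ℝ := fun x => fderiv ℝ φ x z - w x * φ x with hF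
  set H : E → ℝ := fun x => z (τ x) * φ x with hHdef
  -- measurability and integrability
  have hd_cont : Continuous fun x => fderiv ℝ φ x z :=
    ((hφ.1.continuous_fderiv one_ne_zero).clm_apply continuous_const)
  have hd_int : Integrable (fun x => fderiv ℝ φ x z) μ := by
    apply Integrable.mono' (integrable_const (Cd * ‖z‖)) hd_cont.aestronglyMeasurable
    apply Eventually.of_forall
    intro x
    calc ‖fderiv ℝ φ x z‖ ≤ ‖fderiv ℝ φ x‖ * ‖z‖ := (fderiv ℝ φ x).le_opNorm z
      _ ≤ Cd * ‖z‖ := by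
          apply mul_le_mul_of_nonneg_right (hCd x) (norm_nonneg z)
  have hwφ_int : Integrable (fun x => w x * φ x) μ := by
    have := hw.bdd_mul hφc.aestronglyMeasurable (Eventually.of_forall fun x => by
      rw [Real.norm_eq_abs]; exact hCφ x)
    apply this.congr
    apply Eventually.of_forall
    intro x
    exact mul_comm (φ x) (w x)
  have hFi : Integrable F μ := hd_int.sub hwφ_int
  have hFm : AEStronglyMeasurable F μ := hFi.aestronglyMeasurable
  have hHm : Measurable H :=
    ((map_continuous z).measurable.comp hτmeas).mul hφc.measurable
  have hHi : Integrable H μ := by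
    apply Integrable.mono' (integrable_const (‖z‖ * Cφ)) hHm.aestronglyMeasurable
    apply Eventually.of_forall
    intro x
    rw [hHdef]
    calc ‖z (τ x) * φ x‖ = ‖z (τ x)‖ * ‖φ x‖ := norm_mul _ _
      _ ≤ ‖z‖ * Cφ := by
          apply mul_le_mul (ContinuousMap.norm_coe_le_norm z (τ x))
            (by rw [Real.norm_eq_abs]; exact hCφ x) (norm_nonneg _) (norm_nonneg _)
  have hnull : ∀ r : ℝ, μ {x | g x = r} = 0 := by
    intro r
    have h1 : μ.map g {r} = 0 := habs (Real.volume_singleton)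
    rw [Measure.map_apply hgm (measurableSet_singleton r)] at h1
    exact h1
  -- continuity
  have hGbase : Continuous fun r => ∫ x in {x | r ≤ g x}, F x ∂μ :=
    cont_of_null_level μ g hgm F hFm hFi hnull
  have hGcont : Continuous fun r : ℝ => - ∫ x in {x | r ≤ g x}, F x ∂μ := hGbase.neg
  refine ⟨hGcont.continuousOn, ?_⟩
  -- the positive and negative part measures
  set Hp : E → ENNReal := fun x => ENNReal.ofReal (H x) with hHp
  set Hm : E → ENNReal := fun x => ENNReal.ofReal (-(H x)) with hHm'
  set νp : Measure ℝ := (μ.withDensity Hp).map g with hνp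
  set νm : Measure ℝ := (μ.withDensity Hm).map g with hνm
  haveI : IsFiniteMeasure (μ.withDensity Hp) :=
    isFiniteMeasure_withDensity_ofReal hHi.hasFiniteIntegral
  haveI : IsFiniteMeasure (μ.withDensity Hm) :=
    isFiniteMeasure_withDensity_ofReal hHi.neg.hasFiniteIntegral
  haveI : IsFiniteMeasure νp := Measure.isFiniteMeasure_map _ _
  haveI : IsFiniteMeasure νm := Measure.isFiniteMeasure_map _ _
  have hνp_ac : νp ≪ (volume : Measure ℝ) := by
    apply Measure.AbsolutelyContinuous.mk
    intro s hs hs0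
    rw [hνp, Measure.map_apply hgm hs, withDensity_apply _ (hgm hs)]
    apply setLIntegral_measure_zero
    have := habs hs0
    rwa [Measure.map_apply hgm hs] at this
  have hνm_ac : νm ≪ (volume : Measure ℝ) := by
    apply Measure.AbsolutelyContinuous.mk
    intro s hs hs0
    rw [hνm, Measure.map_apply hgm hs, withDensity_apply _ (hgm hs)]
    apply setLIntegral_measure_zero
    have := habs hs0
    rwa [Measure.map_apply hgm hs] at this
  have hν : ∀ A : Set ℝ, MeasurableSet A →
      (νp A).toReal - (νm A).toReal = ∫ x in g ⁻¹' A, H x ∂μ := by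
    intro A hA
    rw [hνp, hνm, Measure.map_apply hgm hA, Measure.map_apply hgm hA,
      withDensity_apply _ (hgm hA), withDensity_apply _ (hgm hA),
      integral_eq_lintegral_pos_part_sub_lintegral_neg_part hHi.integrableOn]
  -- interval identity
  have hint : ∀ a b : ℝ, a < b → b < 0 →
      (νp (Set.Ioc a b)).toReal - (νm (Set.Ioc a b)).toReal
        = ∫ r in Set.Ioc a b, (- ∫ x in {x | r ≤ g x}, F x ∂μ) := by
    intro a b hab hb0
    set ε : ℝ := (b - a) / 2 with hεdef
    set r : ℝ := (a + b) / 2 with hrdef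
    have hε : 0 < ε := by rw [hεdef]; linarith
    have hra : r - ε = a := by rw [hεdef, hrdef]; ring
    have hrb : r + ε = b := by rw [hεdef, hrdef]; ring
    have hrε : r + ε < 0 := by rw [hrb]; exact hb0
    have hk := hkey φ hφ ε hε r hrε
    rw [hra, hrb] at hk
    -- closed strip integral equals Ioc strip integral
    have hsets : {x | a ≤ g x ∧ g x ≤ b} =ᵐ[μ] (g ⁻¹' Set.Ioc a b) := by
      have hna : ∀ᵐ x ∂μ, g x ≠ a := by
        rw [ae_iff]
        simpa using hnull a
      filter_upwards [hna] with x hx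
      have : (a ≤ g x ∧ g x ≤ b) ↔ (a < g x ∧ g x ≤ b) := by
        constructor
        · rintro ⟨h1, h2⟩
          exact ⟨lt_of_le_of_ne h1 (Ne.symm hx), h2⟩
        · rintro ⟨h1, h2⟩
          exact ⟨le_of_lt h1, h2⟩
      exact propext ((Set.mem_Ioc).symm.trans this.symm).symm
    have hstrip : ∫ x in {x | a ≤ g x ∧ g x ≤ b}, H x ∂μ = ∫ x in g ⁻¹' Set.Ioc a b, H x ∂μ :=
      setIntegral_congr_set hsets
    -- from hk : (1/(2ε)) * closed strip integral = -∫ theta * F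
    have h2ε : (2 : ℝ) * ε ≠ 0 := by positivity
    have hk2 : ∫ x in g ⁻¹' Set.Ioc a b, H x ∂μ
        = (2 * ε) * (- ∫ x, theta r ε (g x) * F x ∂μ) := by
      rw [← hstrip, ← hk]
      field_simp
      rfl
    -- identify RHS with the `G` integral via Fubini
    have hswap := interval_swap μ g hgm F hFm hFi a b
    have htheta : ∀ x : E, (volume (Set.Ioc a (min b (g x)))).toReal * F x
        = (2 * ε) * (theta r ε (g x) * F x) := by
      intro x
      rw [← hra, ← hrb, vol_theta r ε (g x) hε]
      ring
    have hswap2 : ∫ r' in Set.Ioc a b, (∫ x in {x | r' ≤ g x}, F x ∂μ)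
        = (2 * ε) * ∫ x, theta r ε (g x) * F x ∂μ := by
      rw [hswap]
      simp_rw [htheta]
      rw [integral_const_mul]
    rw [hν _ measurableSet_Ioc, hk2, integral_neg, hswap2]
    ring
  -- conclude via the density identification
  have hdens := density_eq νp νm hνp_ac hνm_ac hGcont hint
  intro A hA hA0
  have hiden : ∫ x, A.indicator (fun _ => (1:ℝ)) (g x) * H x ∂μ
      = ∫ x in g ⁻¹' A, H x ∂μ := by
    rw [← integral_indicator (hgm hA)]
    apply integral_congr_ae
    apply Eventually.of_forall
    intro x
    by_cases h : g x ∈ A <;> simp [Set.indicator_apply, h]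
  calc ∫ x, A.indicator (fun _ => (1:ℝ)) (g x) * (z (τ x) * φ x) ∂μ
      = ∫ x in g ⁻¹' A, H x ∂μ := hiden
    _ = (νp A).toReal - (νm A).toReal := (hν A hA).symm
    _ = ∫ r in A, (- ∫ x in {x | r ≤ g x}, F x ∂μ) := hdens A hA hA0
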